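/- arXiv:0912.3709 — 4 statements merged into one kernel-verified Lean document; each statement's English description precedes it below -/
import Mathlib

section
/- Consider the planar system u' = μ₂u + c(9u² + 14v²) + d₁u(u²+2v²) + d₂u(u² - (26/7)v²), v' = μ₂v + 14cuv + d₁v(u²+2v²) + d₂v(-(13/7)u² + (30/7)v²). Any equilibrium with v ≠ 0 and v² ≠ (5/14)u² (i.e. off the invariant axes) satisfies u = 7c/(4d₂) and μ₂ = -(7c²/(16d₂²))(7d₁ + 43d₂) - (2d₁ + (30/7)d₂)v², provided d₂ ≠ 0. -/
/-- Equilibria of the `Fix(D₄⊕Z₂ᶜ)` planar system off the invariant axes satisfy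
`u = 7c/(4d₂)` and the stated relation for `μ₂`. -/
theorem stmt_4 (μ₂ c d₁ d₂ u v : ℝ) (hd₂ : d₂ ≠ 0)
    (hu : μ₂ * u + c * (9 * u ^ 2 + 14 * v ^ 2) + d₁ * u * (u ^ 2 + 2 * v ^ 2)
          + d₂ * u * (u ^ 2 - (26 / 7) * v ^ 2) = 0)
    (hv : μ₂ * v + 14 * c * u * v + d₁ * v * (u ^ 2 + 2 * v ^ 2)
          + d₂ * v * (-(13 / 7) * u ^ 2 + (30 / 7) * v ^ 2) = 0)
    (hv0 : v ≠ 0) (hoff : v ^ 2 ≠ (5 / 14) * u ^ 2) :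
    u = 7 * c / (4 * d₂) ∧
    μ₂ = -(7 * c ^ 2 / (16 * d₂ ^ 2)) * (7 * d₁ + 43 * d₂)
         - (2 * d₁ + (30 / 7) * d₂) * v ^ 2 := by
  have h1 : v * (μ₂ + 14 * c * u + d₁ * (u ^ 2 + 2 * v ^ 2)
      + d₂ * (-(13 / 7) * u ^ 2 + (30 / 7) * v ^ 2)) = 0 := by
    linear_combination hv
  have h1' : μ₂ + 14 * c * u + d₁ * (u ^ 2 + 2 * v ^ 2)
      + d₂ * (-(13 / 7) * u ^ 2 + (30 / 7) * v ^ 2) = 0 :=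
    (mul_eq_zero.mp h1).resolve_left hv0
  have key : (4 * d₂ * u - 7 * c) * (u ^ 2 - (14 / 5) * v ^ 2) = 0 := by
    linear_combination (7 / 5) * hu - (7 / 5) * u * h1'
  have hne : u ^ 2 - (14 / 5) * v ^ 2 ≠ 0 := by
    intro h
    apply hoff
    linarith
  have hfac : 4 * d₂ * u - 7 * c = 0 := by
    rcases mul_eq_zero.mp key with h | h
    · exact h
    · exact absurd h hne
  have hU : u = 7 * c / (4 * d₂) := by
    field_simp
    linarith
  refine ⟨hU, ?_⟩
  have hμ : μ₂ = -(14 * c * u) - d₁ * (u ^ 2 + 2 * v ^ 2)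
      - d₂ * (-(13 / 7) * u ^ 2 + (30 / 7) * v ^ 2) := by linarith
  rw [hμ, hU]
  field_simp
  ring
end

section
/- The lines v = ±√(5/14)·u are invariant under the planar flow u' = μ₂u + c(9u²+14v²) + d₁u(u²+2v²) + d₂u(u²-(26/7)v²), v' = μ₂v + 14cuv + d₁v(u²+2v²) + d₂v(-(13/7)u²+(30/7)v²); that is, if v = √(5/14)u then v' = √(5/14)u', and similarly for the minus sign. -/
/-- The cubic-symmetry axes `v = ±√(5/14)·u` are invariant under the `Fix(D₄⊕Z₂ᶜ)`
planar vector field. -/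
theorem stmt_5 (μ₂ c d₁ d₂ : ℝ) :
    ∀ u v : ℝ,
      (v = Real.sqrt (5 / 14) * u →
        μ₂ * v + 14 * c * u * v + d₁ * v * (u ^ 2 + 2 * v ^ 2)
            + d₂ * v * (-(13 / 7) * u ^ 2 + (30 / 7) * v ^ 2)
          = Real.sqrt (5 / 14) *
            (μ₂ * u + c * (9 * u ^ 2 + 14 * v ^ 2) + d₁ * u * (u ^ 2 + 2 * v ^ 2)
              + d₂ * u * (u ^ 2 - (26 / 7) * v ^ 2))) ∧
      (v = -(Real.sqrt (5 / 14)) * u →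
        μ₂ * v + 14 * c * u * v + d₁ * v * (u ^ 2 + 2 * v ^ 2)
            + d₂ * v * (-(13 / 7) * u ^ 2 + (30 / 7) * v ^ 2)
          = -(Real.sqrt (5 / 14)) *
            (μ₂ * u + c * (9 * u ^ 2 + 14 * v ^ 2) + d₁ * u * (u ^ 2 + 2 * v ^ 2)
              + d₂ * u * (u ^ 2 - (26 / 7) * v ^ 2))) := by
  intro u v
  have hs : Real.sqrt (5 / 14) ^ 2 = 5 / 14 := Real.sq_sqrt (by norm_num)
  constructor <;> intro h <;> subst h
  · linear_combination (-14*c*Real.sqrt (5/14)*u^2 + 8*d₂*Real.sqrt (5/14)*u^3) * hs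
  · linear_combination (14*c*Real.sqrt (5/14)*u^2 - 8*d₂*Real.sqrt (5/14)*u^3) * hs
end

section
/- The lines w = ±√(10/7)·u are invariant under the planar flow u' = μ₂u + c(9u² - 21w²) + d₁u(u²+2w²) + d₂u(u² - (17/14)w²), w' = μ₂w - 21cuw + d₁w(u²+2w²) + d₂w(-(17/28)u² - (5/56)w²). -/
/-- The cubic-symmetry axes `w = ±√(10/7)·u` are invariant under the `Fix(D₃⊕Z₂ᶜ)`
planar vector field. -/
theorem stmt_6 (μ₂ c d₁ d₂ : ℝ) :
    ∀ u w : ℝ,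
      (w = Real.sqrt (10 / 7) * u →
        μ₂ * w - 21 * c * u * w + d₁ * w * (u ^ 2 + 2 * w ^ 2)
            + d₂ * w * (-(17 / 28) * u ^ 2 - (5 / 56) * w ^ 2)
          = Real.sqrt (10 / 7) *
            (μ₂ * u + c * (9 * u ^ 2 - 21 * w ^ 2) + d₁ * u * (u ^ 2 + 2 * w ^ 2)
              + d₂ * u * (u ^ 2 - (17 / 14) * w ^ 2))) ∧
      (w = -(Real.sqrt (10 / 7)) * u →
        μ₂ * w - 21 * c * u * w + d₁ * w * (u ^ 2 + 2 * w ^ 2)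
            + d₂ * w * (-(17 / 28) * u ^ 2 - (5 / 56) * w ^ 2)
          = -(Real.sqrt (10 / 7)) *
            (μ₂ * u + c * (9 * u ^ 2 - 21 * w ^ 2) + d₁ * u * (u ^ 2 + 2 * w ^ 2)
              + d₂ * u * (u ^ 2 - (17 / 14) * w ^ 2))) := by
  have h : Real.sqrt (10 / 7) ^ 2 = 10 / 7 := Real.sq_sqrt (by norm_num)
  intro u w
  refine ⟨fun hw => ?_, fun hw => ?_⟩ <;> subst hw
  · linear_combination ((21 * c * u ^ 2 + (9 / 8) * d₂ * u ^ 3) * Real.sqrt (10 / 7)) * h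
  · linear_combination (-(21 * c * u ^ 2 + (9 / 8) * d₂ * u ^ 3) * Real.sqrt (10 / 7)) * h
end

section
/- For the axisymmetric equilibrium α with coordinate y₀ > 0 and c ≥ 0, d₂ < 0: the eigenvalues λ₂^α = -20c·y₀ + (5/2)d₂y₀², λ₃^α = -30c·y₀ - (45/28)d₂y₀², λ₄^α = 5c·y₀ - (20/7)d₂y₀² satisfy λ₂^α < 0 and λ₄^α > 0; consequently α₊ is never stable within the pure ℓ=4 modes. -/
/-- Eigenvalue signs at the axisymmetric equilibrium `α₊`: if `c ≥ 0`, `d₂ < 0` and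
`y₀ > 0` then `lam₂^α < 0` and `lam₄^α > 0`; hence `α₊` is never stable within the pure
`ℓ = 4` modes. -/
theorem stmt_18 (c d₂ y₀ : ℝ) (hc : 0 ≤ c) (hd₂ : d₂ < 0) (hy₀ : 0 < y₀) :
    let lam₂ := -20 * c * y₀ + (5 / 2) * d₂ * y₀ ^ 2
    let lam₄ := 5 * c * y₀ - (20 / 7) * d₂ * y₀ ^ 2
    lam₂ < 0 ∧ lam₄ > 0 := by
  have h1 : 0 < y₀ ^ 2 := by positivity
  constructor
  · nlinarith
  · nlinarith
end
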